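/- Let s be in the upper half plane and z₁,…,z_M in the upper half plane. Then c(s, (z₁+⋯+z_M)/M) ≤ (1/M)·∑_{i=1}^M c(s, z_i), where c(s,z) = |s−z|²/(Im(s)·Im(z)). Moreover c(M·s, z₁+⋯+z_M) = c(s, (z₁+⋯+z_M)/M). -/

import Mathlib

theorem stmt8 (M : ℕ) (hM : 1 ≤ M) (s : ℂ) (hs : 0 < s.im)
    (z : Fin M → ℂ) (hz : ∀ i, 0 < (z i).im) :
    (fun a b : ℂ => ‖a - b‖ ^ 2 / (a.im * b.im)) s
        ((∑ i, z i) / M) ≤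
      (1 / M : ℝ) * ∑ i, ‖s - z i‖ ^ 2 / (s.im * (z i).im) ∧
    ‖(M : ℂ) * s - ∑ i, z i‖ ^ 2 / (((M : ℂ) * s).im * (∑ i, z i).im) =
      ‖s - (∑ i, z i) / M‖ ^ 2 / (s.im * ((∑ i, z i) / M).im) := by
  have hM0 : (0:ℝ) < M := by exact_mod_cast hM
  have hMne : (M:ℂ) ≠ 0 := by exact_mod_cast hM0.ne'
  set Z : ℂ := ∑ i, z i with hZ
  have hZim : Z.im = ∑ i, (z i).im := by
    simp [hZ, Complex.im_sum]
  have hZpos : 0 < Z.im := by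
    rw [hZim]
    exact Finset.sum_pos (fun i _ => hz i) (Finset.univ_nonempty_iff.mpr ⟨⟨0, hM⟩⟩)
  have hdivim : (Z / (M:ℂ)).im = Z.im / M := by
    rw [Complex.div_im]
    simp [Complex.normSq_natCast]
    field_simp
  have hfactor : (M:ℂ) * s - Z = (M:ℂ) * (s - Z / M) := by
    field_simp
  have habs : ‖(M:ℂ) * s - Z‖ = M * ‖s - Z / M‖ := by
    rw [hfactor, norm_mul, Complex.norm_natCast]
  constructor
  · -- inequality
    simp only
    rw [hdivim]
    have hsum : s - Z / M = ((M:ℂ) * s - Z) / M := by field_simp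
    have hfact2 : (M:ℂ) * s - Z = ∑ i, (s - z i) := by
      simp [hZ, Finset.sum_sub_distrib, mul_comm]
    have habs2 : ‖s - Z / M‖ = ‖∑ i, (s - z i)‖ / M := by
      rw [hsum, norm_div, Complex.norm_natCast, hfact2]
    rw [habs2]
    have key : (∑ i, ‖s - z i‖) ^ 2 / (∑ i, (z i).im)
        ≤ ∑ i, ‖s - z i‖ ^ 2 / (z i).im :=
      Finset.sq_sum_div_le_sum_sq_div _ _ (fun i _ => hz i)
    have htri : ‖∑ i, (s - z i)‖ ≤ ∑ i, ‖s - z i‖ := by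
      exact norm_sum_le _ _
    have h1 : ‖∑ i, (s - z i)‖ ^ 2 / Z.im
        ≤ ∑ i, ‖s - z i‖ ^ 2 / (z i).im := by
      refine le_trans ?_ key
      rw [hZim]
      gcongr
      exact Finset.sum_nonneg fun i _ => (hz i).le
    calc (‖∑ i, (s - z i)‖ / M) ^ 2 / (s.im * (Z.im / M))
        = (‖∑ i, (s - z i)‖ ^ 2 / Z.im) / (M * s.im) := by
          field_simp
      _ ≤ (∑ i, ‖s - z i‖ ^ 2 / (z i).im) / (M * s.im) := by
          gcongr
      _ = (1 / M : ℝ) * ∑ i, ‖s - z i‖ ^ 2 / (s.im * (z i).im) := by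
          rw [Finset.sum_div, Finset.mul_sum]
          refine Finset.sum_congr rfl fun i _ => ?_
          field_simp
  · rw [habs, hdivim, mul_pow]
    have : ((M:ℂ) * s).im = M * s.im := by simp [Complex.mul_im]
    rw [this]
    field_simp
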